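/- Let c ≥ 1 be a natural number and consider the one-counter parity game with Falsifier-owned states v_0,…,v_c, where each v_j has a weight-0 self-loop, there is a weight −1 edge from v_j to v_{j+1} for each 0 ≤ j < c, state v_c has color 1 and all other states have color 0. Then for every i ∈ ℕ, Verifier has a winning strategy from the configuration (v_0, i) if and only if i < c. -/

import Mathlib

namespace OneCounter

abbrev Config (S : Type) := S × ℕ

/-- A maximal (finite or infinite) play over a step relation, represented as a
function `ℕ → Option C` that is `some` on an initial segment. -/
structure PlayOn {C : Type} (step : C → C → Prop) where
  f : ℕ → Option C
  start : (f 0).isSome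
  succ : ∀ n c', f (n+1) = some c' → ∃ c, f n = some c ∧ step c c'
  maximal : ∀ n c, f n = some c → f (n+1) = none → ∀ c', ¬ step c c'

/-- The history after `n` steps, most recent configuration first. -/
def hist {C : Type} (f : ℕ → Option C) (n : ℕ) : List C :=
  ((List.range (n+1)).reverse).filterMap f

/-- A strategy for the player owning the configurations satisfying `mine`:
a partial function from histories (most recent configuration first) to
configurations, prescribing only legal moves and defined whenever a move
is available. -/
structure StrategyOn {C : Type} (step : C → C → Prop) (mine : C → Prop) where
  act : List C → Option C
  legal : ∀ h c c', act (c :: h) = some c' → step c c'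
  total : ∀ h c, mine c → (∃ c', step c c') → (act (c :: h)).isSome

/-- A play is compatible with a strategy if at every position owned by the
strategy's player, the next configuration is the prescribed one. -/
def Compat {C : Type} {step : C → C → Prop} {mine : C → Prop}
    (σ : StrategyOn step mine) (ρ : PlayOn step) : Prop :=
  ∀ n c, ρ.f n = some c → mine c → ρ.f (n+1) = σ.act (hist ρ.f n)

/-- A one-counter parity game: two players `Verifier` (`true`) and
`Falsifier` (`false`); every state has an owner and a color. -/
structure OCPG (S : Type) where
  owner : S → Bool
  trans : S → ℤ → S → Prop
  color : S → ℕ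

namespace OCPG

variable {S : Type} (G : OCPG S)

/-- One step between configurations: a transition whose weight matches the
counter difference (the counter, being a natural number, never goes below 0). -/
def Step (c c' : Config S) : Prop := G.trans c.1 ((c'.2 : ℤ) - (c.2 : ℤ)) c'.1

/-- All edge weights lie in `{-1, 0, +1}`. -/
def SmallWeights : Prop := ∀ s v s', G.trans s v s' → v = -1 ∨ v = 0 ∨ v = 1

/-- Color `k` occurs infinitely often along the play. -/
def InfOcc (ρ : PlayOn G.Step) (k : ℕ) : Prop :=
  ∀ N, ∃ n, N ≤ n ∧ ∃ c, ρ.f n = some c ∧ G.color c.1 = k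

/-- The least color occurring infinitely often exists and is even. -/
def VerifierWinsInf (ρ : PlayOn G.Step) : Prop :=
  ∃ k, G.InfOcc ρ k ∧ Even k ∧ ∀ k', G.InfOcc ρ k' → k ≤ k'

/-- Player `b` wins the play: a finite maximal play is lost by the owner of its
last configuration, and an infinite play is won by Verifier iff the least color
occurring infinitely often is even. -/
def WinsPlay (b : Bool) (ρ : PlayOn G.Step) : Prop :=
  (∃ n c, ρ.f n = some c ∧ ρ.f (n+1) = none ∧ G.owner c.1 ≠ b)
  ∨ ((∀ n, (ρ.f n).isSome) ∧ (G.VerifierWinsInf ρ ↔ b = true))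

/-- Player `b` has a winning strategy from configuration `c₀`. -/
def WinsFrom (b : Bool) (c₀ : Config S) : Prop :=
  ∃ σ : StrategyOn G.Step (fun c => G.owner c.1 = b),
    ∀ ρ : PlayOn G.Step, ρ.f 0 = some c₀ → Compat σ ρ → G.WinsPlay b ρ

end OCPG


/-- The gadget game for `r < c`: Falsifier-owned states `v_0, …, v_c`, each
with a weight-0 self-loop, weight −1 edges `v_j → v_{j+1}`, state `v_c` colored
1 and all others colored 0. -/
def ltGadget (c : ℕ) : OCPG (Fin (c+1)) where
  owner := fun _ => false
  trans := fun x v y => (x = y ∧ v = 0) ∨ ((x : ℕ) + 1 = (y : ℕ) ∧ v = -1)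
  color := fun x => if (x : ℕ) = c then 1 else 0

/-- Invariant: along any play of the gadget starting at `(v_0, i)`,
the state index plus the counter equals `i`. -/
lemma ltGadget_inv (c i : ℕ) (ρ : PlayOn (ltGadget c).Step)
    (h0 : ρ.f 0 = some (⟨0, Nat.succ_pos c⟩, i)) :
    ∀ n cfg, ρ.f n = some cfg → (cfg.1 : ℕ) + cfg.2 = i := by
  intro n
  induction n with
  | zero =>
    intro cfg h
    rw [h0] at h
    cases h
    simp
  | succ n ih =>
    intro cfg h
    obtain ⟨cfg0, h0', hstep⟩ := ρ.succ n cfg h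
    have hinv := ih cfg0 h0'
    simp only [OCPG.Step, ltGadget] at hstep
    rcases hstep with ⟨heq, hv⟩ | ⟨heq, hv⟩
    · have : (cfg0.1 : ℕ) = (cfg.1 : ℕ) := by rw [heq]
      omega
    · omega

/-- The descending play: go down to `v_c` and loop there forever. -/
def descPlay (c i : ℕ) (hci : c ≤ i) : PlayOn (ltGadget c).Step where
  f := fun n => some (⟨min n c, by omega⟩, i - min n c)
  start := rfl
  succ := fun n c' h => by
    refine ⟨_, rfl, ?_⟩
    cases (Option.some_injective _ h)
    show ((⟨min n c, _⟩ : Fin (c+1)) = ⟨min (n+1) c, _⟩ ∧ _) ∨ _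
    by_cases hn : n < c
    · right
      constructor
      · show min n c + 1 = min (n+1) c
        omega
      · show ((i - min (n+1) c : ℕ) : ℤ) - ((i - min n c : ℕ) : ℤ) = -1
        omega
    · left
      constructor
      · ext
        show min n c = min (n+1) c
        omega
      · show ((i - min (n+1) c : ℕ) : ℤ) - ((i - min n c : ℕ) : ℤ) = 0
        omega
  maximal := fun n cfg h hnone => by simp at hnone

/-- Verifier wins the `r < c` gadget from `(v_0, i)` iff `i < c`. -/
theorem ltGadget_correct (c : ℕ) (hc : 1 ≤ c) (i : ℕ) :
    (ltGadget c).WinsFrom true (⟨0, Nat.succ_pos c⟩, i) ↔ i < c := by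
  constructor
  · rintro ⟨σ, hσ⟩
    by_contra hlt
    push_neg at hlt
    have hwin := hσ (descPlay c i hlt) (by simp [descPlay]) ?compat
    case compat =>
      intro n cfg hcfg hmine
      simp [ltGadget] at hmine
    rcases hwin with ⟨n, cfg, _, hnone, _⟩ | ⟨_, hiff⟩
    · simp [descPlay] at hnone
    · obtain ⟨k, hk, hkeven, hkle⟩ := hiff.mpr rfl
      have h1 : (ltGadget c).InfOcc (descPlay c i hlt) 1 := by
        intro N
        refine ⟨max N c, le_max_left _ _, _, rfl, ?_⟩
        show (if min (max N c) c = c then 1 else 0) = 1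
        rw [if_pos (by omega)]
      have hk1 : k ≤ 1 := hkle 1 h1
      have hk0 : k = 0 := by
        rcases hkeven with ⟨m, hm⟩
        omega
      subst hk0
      obtain ⟨n, hn, cfg, hcfg, hcol⟩ := hk c
      simp only [descPlay] at hcfg
      cases hcfg
      simp [ltGadget] at hcol
      omega
  · intro hi
    refine ⟨⟨fun _ => none, ?_, ?_⟩, ?_⟩
    · intro h c' c'' h'
      simp at h'
    · intro h cfg hmine _
      simp [ltGadget] at hmine
    intro ρ h0 _
    by_cases hall : ∀ n, (ρ.f n).isSome
    · right
      refine ⟨hall, ?_⟩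
      simp only [iff_true]
      refine ⟨0, ?_, Even.zero, fun k' _ => Nat.zero_le k'⟩
      intro N
      obtain ⟨cfg, hcfg⟩ := Option.isSome_iff_exists.mp (hall N)
      refine ⟨N, le_refl N, cfg, hcfg, ?_⟩
      have hinv := ltGadget_inv c i ρ h0 N cfg hcfg
      have hlt : (cfg.1 : ℕ) ≠ c := by omega
      simp [ltGadget, hlt]
    · left
      push_neg at hall
      obtain ⟨n, hn⟩ := hall
      have hn' : ρ.f n = none := Option.not_isSome_iff_eq_none.mp hn
      have hex : ∃ m, ρ.f m = none := ⟨n, hn'⟩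
      set m := Nat.find hex with hm
      have hmnone : ρ.f m = none := Nat.find_spec hex
      have hm0 : m ≠ 0 := by
        intro h
        rw [h, h0] at hmnone
        exact Option.some_ne_none _ hmnone
      have hprev : ρ.f (m - 1) ≠ none := Nat.find_min hex (by omega)
      obtain ⟨cfg, hcfg⟩ := Option.ne_none_iff_exists'.mp hprev
      refine ⟨m - 1, cfg, hcfg, ?_, ?_⟩
      · rwa [Nat.sub_add_cancel (by omega)]
      · simp [ltGadget]

end OneCounter
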